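/- For every x = (x1, x2) in F_p × F_p with b2 + b7·x2 ≠ 0 and a3 + a8·x1 ≠ 0, the element x⁻¹ = ((1 - a3 b2 - a3 b7 x2)/(a8(b2 + b7 x2)), (1 - a3 b2 - a8 b2 x1)/(b7(a3 + a8 x1))) satisfies x * x⁻¹ = x⁻¹ * x = 1_*, where 1_* = (1/b7 - a3/a8, 1/a8 - b2/b7). -/

import Mathlib

/-- The entropoid multiplication on `F_p × F_p`. -/
def emul {p : ℕ} [Fact p.Prime] (a3 a8 b2 b7 : ZMod p)
    (x y : ZMod p × ZMod p) : ZMod p × ZMod p :=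
  (a3 * (a8 * b2 - b7) / (a8 * b7) + a3 * x.2 + a8 * b2 * y.1 / b7 + a8 * x.2 * y.1,
   -(b2 * (a8 - a3 * b7)) / (a8 * b7) + a3 * b7 * y.2 / a8 + b2 * x.1 + b7 * x.1 * y.2)

theorem entropoid_inverse {p : ℕ} [Fact p.Prime] (a3 a8 b2 b7 : ZMod p)
    (ha8 : a8 ≠ 0) (hb7 : b7 ≠ 0) (x : ZMod p × ZMod p)
    (hx2 : b2 + b7 * x.2 ≠ 0) (hx1 : a3 + a8 * x.1 ≠ 0) :
    emul a3 a8 b2 b7 x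
        ((1 - a3 * b2 - a3 * b7 * x.2) / (a8 * (b2 + b7 * x.2)),
         (1 - a3 * b2 - a8 * b2 * x.1) / (b7 * (a3 + a8 * x.1)))
      = (1 / b7 - a3 / a8, 1 / a8 - b2 / b7) ∧
    emul a3 a8 b2 b7
        ((1 - a3 * b2 - a3 * b7 * x.2) / (a8 * (b2 + b7 * x.2)),
         (1 - a3 * b2 - a8 * b2 * x.1) / (b7 * (a3 + a8 * x.1))) x
      = (1 / b7 - a3 / a8, 1 / a8 - b2 / b7) := by
  obtain ⟨x1, x2⟩ := x
  simp only at hx1 hx2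
  obtain ⟨u, rfl⟩ : ∃ u, x1 = (u - a3) / a8 := ⟨a3 + a8 * x1, by field_simp; ring⟩
  obtain ⟨v, rfl⟩ : ∃ v, x2 = (v - b2) / b7 := ⟨b2 + b7 * x2, by field_simp; ring⟩
  have hu : u ≠ 0 := by
    intro h; apply hx1; rw [h]; field_simp <;> ring
  have hv : v ≠ 0 := by
    intro h; apply hx2; rw [h]; field_simp <;> ring
  rw [show a3 + a8 * ((u - a3) / a8) = u by field_simp <;> ring,
      show b2 + b7 * ((v - b2) / b7) = v by field_simp <;> ring,
      show 1 - a3 * b2 - a3 * b7 * ((v - b2) / b7) = 1 - a3 * v by field_simp <;> ring,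
      show 1 - a3 * b2 - a8 * b2 * ((u - a3) / a8) = 1 - b2 * u by field_simp <;> ring]
  constructor <;> simp only [emul, Prod.mk.injEq] <;> constructor <;>
    field_simp <;>
    first
      | ring1
      | (rw [div_eq_iff (by simp [ha8, hb7, hu, hv])]; ring1)
      | (rw [div_add' _ _ _ (by simp [ha8, hb7, hu, hv]), div_mul_eq_mul_div,
             div_eq_iff (by simp [ha8, hb7, hu, hv])]; ring1)
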